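/- arXiv:2503.22770 — 3 statements merged into one kernel-verified Lean document; each statement's English description precedes it below -/
import Mathlib

section
/- Let a be an elliptic function that is not constant on the complement of its poles, and suppose a has at least one pole. Let N ≥ 0 be an integer such that there exists p₀ ∈ ℂ with both p₀ and p₀ + N·s poles of a, while for every integer m > N there is no point p with both p and p + m·s poles of a. Define f(z) = a(z + s) − a(z). Then there exists p ∈ ℂ such that both p and p + (N+1)·s are poles of f, and for every integer m > N + 1 there is no point p' with both p' and p' + m·s poles of f; that is, the polar dispersion of f equals N + 1. -/
open Complex

noncomputable section

/-- The lattice generated by two complex numbers. -/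
def latticeGen (l1 l2 : ℂ) : Set ℂ := {z : ℂ | ∃ m n : ℤ, z = (m : ℂ) * l1 + (n : ℂ) * l2}

/-- `f` is elliptic with respect to `Λ`: meromorphic on all of `ℂ` and `Λ`-periodic at
every point of analyticity. -/
def IsElliptic (Λ : Set ℂ) (f : ℂ → ℂ) : Prop :=
  (∀ z : ℂ, MeromorphicAt f z) ∧
    ∀ lam ∈ Λ, ∀ z : ℂ, AnalyticAt ℂ f z → f (z + lam) = f z

/-- The Weierstrass zeta function of the lattice `Λ`. -/
def wzeta (Λ : Set ℂ) (z : ℂ) : ℂ :=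
  1 / z + ∑' l : {l : ℂ // l ∈ Λ ∧ l ≠ 0},
    (1 / (z - (l : ℂ)) + 1 / (l : ℂ) + z / (l : ℂ) ^ 2)

/-- The coefficient of `(z - α)⁻ʲ` in the Laurent expansion of `f` at `α`, computed as the
limit, as `ε → 0⁺`, of `(2πi)⁻¹ ∮_{|z-α|=ε} f(z) (z-α)^(j-1) dz`. -/
def laurentCoeff (f : ℂ → ℂ) (α : ℂ) (j : ℕ) : ℂ :=
  Filter.limUnder (nhdsWithin (0 : ℝ) (Set.Ioi 0)) fun ε : ℝ =>
    (2 * (Real.pi : ℂ) * Complex.I)⁻¹ * ∮ z in C(α, ε), f z * (z - α) ^ (j - 1)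

/-- `p` is a pole of `f`: `f` is meromorphic at `p` with nonzero principal part. -/
def IsPole (f : ℂ → ℂ) (p : ℂ) : Prop :=
  MeromorphicAt f p ∧ ∃ j : ℕ, 1 ≤ j ∧ laurentCoeff f p j ≠ 0

/-- `f` is summable with respect to the shift by `s`. -/
def IsSummableE (Λ : Set ℂ) (s : ℂ) (f : ℂ → ℂ) : Prop :=
  ∃ g : ℂ → ℂ, IsElliptic Λ g ∧
    ∀ z : ℂ, AnalyticAt ℂ g z → AnalyticAt ℂ g (z + s) → f z = g (z + s) - g z

/-- The orbital residue of `f` at `β` of order `j`. -/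
def ores (s : ℂ) (f : ℂ → ℂ) (β : ℂ) (j : ℕ) : ℂ :=
  ∑' n : ℤ, laurentCoeff f (β + (n : ℂ) * s) j

end

section Aux

open Complex Metric Filter Set

lemma aux_tendsto_coeff {f g : ℂ → ℂ} {α : ℂ} {n : ℤ} (hg : AnalyticAt ℂ g α)
    (hfg : ∀ᶠ z in nhdsWithin α {α}ᶜ, f z = (z - α) ^ n * g z) (j : ℕ) (hj : 1 ≤ j) :
    ∃ c : ℂ,
      Filter.Tendsto (fun ε : ℝ =>
          (2 * (Real.pi : ℂ) * Complex.I)⁻¹ * ∮ z in C(α, ε), f z * (z - α) ^ (j - 1))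
        (nhdsWithin (0 : ℝ) (Set.Ioi 0)) (nhds c) ∧
      laurentCoeff f α j = c ∧ ((j : ℤ) = -n → c = g α) ∧ (-n < (j : ℤ) → c = 0) := by
  rw [eventually_nhdsWithin_iff] at hfg
  have hball := hg.eventually_analyticAt.and hfg
  rw [Metric.eventually_nhds_iff] at hball
  obtain ⟨δ, hδ0, hδ⟩ := hball
  set r : ℝ := δ / 2 with hr
  have hr0 : 0 < r := by positivity
  have hmem : Set.Ioo (0:ℝ) r ∈ nhdsWithin (0:ℝ) (Set.Ioi 0) :=
    Ioo_mem_nhdsGT_of_mem ⟨le_refl 0, hr0⟩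
  have hsub : ∀ ε : ℝ, ε ∈ Set.Ioo 0 r → ∀ z ∈ sphere α ε,
      z ≠ α ∧ f z = (z - α) ^ n * g z := by
    intro ε hε z hz
    have hdz : dist z α = ε := hz
    have hlt : dist z α < δ := by rw [hdz]; have := hε.2; simp only [hr] at this; linarith
    have hzne : z ≠ α := by
      intro h; rw [h, dist_self] at hdz; exact absurd hdz.symm (ne_of_gt hε.1)
    exact ⟨hzne, (hδ hlt).2 (by simpa using hzne)⟩
  have hgdiff : ∀ ε ∈ Set.Ioo (0:ℝ) r, ∀ z ∈ closedBall α ε, AnalyticAt ℂ g z := by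
    intro ε hε z hz
    have : dist z α < δ := lt_of_le_of_lt (mem_closedBall.mp hz)
      (by have := hε.2; simp only [hr] at this; linarith)
    exact (hδ this).1
  have hk : ∀ ε ∈ Set.Ioo (0:ℝ) r,
      (∮ z in C(α, ε), f z * (z - α) ^ (j - 1))
        = ∮ z in C(α, ε), g z * (z - α) ^ (n + (j:ℤ) - 1) := by
    intro ε hε
    refine circleIntegral.integral_congr hε.1.le fun z hz => ?_
    obtain ⟨hzne, hfz⟩ := hsub ε hε z hz
    have h0 : z - α ≠ 0 := sub_ne_zero.2 hzne
    rw [hfz]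
    rw [show ((z - α) ^ (j-1) : ℂ) = (z - α) ^ ((j:ℤ) - 1) by
      rw [← zpow_natCast]; congr 1; omega]
    rw [mul_comm ((z-α)^n), mul_assoc, ← zpow_add₀ h0]
    congr 2
    omega
  by_cases hcase : 0 ≤ n + (j:ℤ) - 1
  · have hzero : ∀ ε ∈ Set.Ioo (0:ℝ) r,
        (2 * (Real.pi:ℂ) * Complex.I)⁻¹ * (∮ z in C(α, ε), f z * (z - α) ^ (j-1)) = 0 := by
      intro ε hε
      rw [hk ε hε]
      have hnk : Set.EqOn (fun z => g z * (z-α)^(n + (j:ℤ)-1))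
          (fun z => g z * (z-α)^((n + (j:ℤ)-1).toNat)) (sphere α ε) := fun z _ => by
        simp only
        rw [← zpow_natCast (z - α) ((n + (j:ℤ)-1).toNat), Int.toNat_of_nonneg hcase]
      rw [circleIntegral.integral_congr hε.1.le hnk]
      rw [Complex.circleIntegral_eq_zero_of_differentiable_on_off_countable hε.1.le
        (f := fun z => g z * (z-α)^((n + (j:ℤ)-1).toNat))
        Set.countable_empty
        (fun z hz => (((hgdiff ε hε z hz).differentiableAt.mul (by fun_prop)).continuousAt).continuousWithinAt)
        (fun z hz => ((hgdiff ε hε z (ball_subset_closedBall hz.1)).differentiableAt.mul (by fun_prop))),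
        mul_zero]
    have htend : Filter.Tendsto (fun ε : ℝ =>
          (2 * (Real.pi : ℂ) * Complex.I)⁻¹ * ∮ z in C(α, ε), f z * (z - α) ^ (j - 1))
        (nhdsWithin (0 : ℝ) (Set.Ioi 0)) (nhds 0) := by
      refine tendsto_const_nhds.congr' ?_
      filter_upwards [hmem] with ε hε
      exact (hzero ε hε).symm
    exact ⟨0, htend, htend.limUnder_eq, fun h => absurd hcase (by omega), fun _ => rfl⟩
  · push_neg at hcase
    obtain ⟨m, hm⟩ : ∃ m : ℕ, (m:ℤ) = -(n + (j:ℤ) - 1) - 1 :=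
      ⟨_, Int.toNat_of_nonneg (by omega)⟩
    obtain ⟨p, hp⟩ := hg
    have hval : ∀ ε ∈ Set.Ioo (0:ℝ) r,
        (2*(Real.pi:ℂ)*Complex.I)⁻¹ * (∮ z in C(α,ε), f z * (z-α)^(j-1))
          = p m (fun _ => 1) := by
      intro ε hε
      have hε0 : 0 < ε := hε.1
      have hdOn : DifferentiableOn ℂ g (closedBall α ε) := fun z hz =>
        ((hgdiff ε hε z hz).differentiableAt).differentiableWithinAt
      have hps : HasFPowerSeriesAt g (cauchyPowerSeries g α ε) α := by
        exact (DifferentiableOn.hasFPowerSeriesOnBall (R := ⟨ε, hε0.le⟩) hdOn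
          (by exact_mod_cast hε0)).hasFPowerSeriesAt
      have heqp : cauchyPowerSeries g α ε = p :=
        hps.eq_formalMultilinearSeries hp
      have happ := cauchyPowerSeries_apply g α ε m 1
      rw [heqp] at happ
      rw [hk ε hε, happ, smul_eq_mul]
      congr 1
      refine (circleIntegral.integral_congr hε0.le fun z hz => ?_).symm
      have hzne : z ≠ α := by
        have hdz : dist z α = ε := hz
        intro h; rw [h, dist_self] at hdz; exact absurd hdz.symm (ne_of_gt hε0)
      have h0 : z - α ≠ 0 := sub_ne_zero.2 hzne
      simp only [smul_eq_mul, one_div, inv_pow]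
      rw [show n + (j:ℤ) - 1 = -(((m:ℕ):ℤ)+1) from by omega, zpow_neg]
      rw [show ((m:ℤ)+1) = ((m+1 : ℕ) : ℤ) from by push_cast; ring, zpow_natCast]
      rw [pow_succ, mul_inv]
      ring
    have htend : Filter.Tendsto (fun ε : ℝ =>
          (2 * (Real.pi : ℂ) * Complex.I)⁻¹ * ∮ z in C(α, ε), f z * (z - α) ^ (j - 1))
        (nhdsWithin (0 : ℝ) (Set.Ioi 0)) (nhds (p m (fun _ => 1))) := by
      refine tendsto_const_nhds.congr' ?_
      filter_upwards [hmem] with ε hε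
      exact (hval ε hε).symm
    refine ⟨p m (fun _ => 1), htend, htend.limUnder_eq, ?_, fun h => absurd hcase (by omega)⟩
    intro h
    have hm0 : m = 0 := by omega
    subst hm0
    exact hp.coeff_zero _

end Aux

section Aux2

open Complex Metric Filter Set

lemma aux_tendsto_laurent {f : ℂ → ℂ} {α : ℂ} (hf : MeromorphicAt f α) (j : ℕ) (hj : 1 ≤ j) :
    Filter.Tendsto (fun ε : ℝ =>
        (2 * (Real.pi : ℂ) * Complex.I)⁻¹ * ∮ z in C(α, ε), f z * (z - α) ^ (j - 1))
      (nhdsWithin (0 : ℝ) (Set.Ioi 0)) (nhds (laurentCoeff f α j)) := by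
  rcases eq_or_ne (meromorphicOrderAt f α) ⊤ with h | h
  · obtain ⟨c, hc, hlc, -, -⟩ := aux_tendsto_coeff (f := f) (g := fun _ => (0:ℂ)) (n := 0)
      analyticAt_const
      (by filter_upwards [meromorphicOrderAt_eq_top_iff.mp h] with z hz; simp [hz]) j hj
    rwa [hlc]
  · obtain ⟨mo, hmo⟩ := WithTop.ne_top_iff_exists.mp h
    obtain ⟨g, hg, hgne, hfg⟩ := (meromorphicOrderAt_eq_int_iff hf).mp hmo.symm
    obtain ⟨c, hc, hlc, -, -⟩ := aux_tendsto_coeff hg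
      (by filter_upwards [hfg] with z hz; simpa [smul_eq_mul] using hz) j hj
    rwa [hlc]

lemma aux_circleIntegrable {f : ℂ → ℂ} {α : ℂ} (hf : MeromorphicAt f α) (j : ℕ) :
    ∀ᶠ ε in nhdsWithin (0:ℝ) (Set.Ioi 0),
      CircleIntegrable (fun z => f z * (z - α) ^ (j-1)) α ε := by
  have h := hf.eventually_analyticAt
  rw [eventually_nhdsWithin_iff, Metric.eventually_nhds_iff] at h
  obtain ⟨δ, hδ0, hδ⟩ := h
  filter_upwards [Ioo_mem_nhdsGT_of_mem (Set.mem_Ico.mpr ⟨le_refl 0, hδ0⟩)] with ε hε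
  apply ContinuousOn.circleIntegrable hε.1.le
  intro z hz
  have hdz : dist z α = ε := hz
  have hzne : z ≠ α := by
    intro h; rw [h, dist_self] at hdz; exact absurd hdz.symm (ne_of_gt hε.1)
  have hlt : dist z α < δ := by rw [hdz]; exact hε.2
  exact (((hδ hlt (by simpa using hzne)).continuousAt).mul (by fun_prop)).continuousWithinAt

lemma aux_laurentCoeff_sub {f g : ℂ → ℂ} {α : ℂ} (hf : MeromorphicAt f α)
    (hg : MeromorphicAt g α) (j : ℕ) (hj : 1 ≤ j) :
    laurentCoeff (fun z => f z - g z) α j = laurentCoeff f α j - laurentCoeff g α j := by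
  have Tf := aux_tendsto_laurent hf j hj
  have Tg := aux_tendsto_laurent hg j hj
  have htend : Filter.Tendsto (fun ε : ℝ =>
      (2 * (Real.pi : ℂ) * Complex.I)⁻¹ *
        ∮ z in C(α, ε), (f z - g z) * (z - α) ^ (j - 1))
      (nhdsWithin (0 : ℝ) (Set.Ioi 0))
      (nhds (laurentCoeff f α j - laurentCoeff g α j)) := by
    refine (Tf.sub Tg).congr' ?_
    filter_upwards [aux_circleIntegrable hf j, aux_circleIntegrable hg j] with ε h1 h2
    have : (fun z => (f z - g z) * (z-α)^(j-1))
        = fun z => f z * (z-α)^(j-1) - g z * (z-α)^(j-1) := funext fun z => sub_mul _ _ _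
    rw [this, circleIntegral.integral_sub h1 h2, mul_sub]
  exact htend.limUnder_eq

lemma aux_laurentCoeff_shift (f : ℂ → ℂ) (s α : ℂ) (j : ℕ) :
    laurentCoeff (fun z => f (z + s)) α j = laurentCoeff f (α + s) j := by
  unfold laurentCoeff
  congr 1
  funext ε
  congr 1
  unfold circleIntegral
  refine intervalIntegral.integral_congr fun θ _ => ?_
  simp only [deriv_circleMap]
  have harg : circleMap α ε θ + s = circleMap (α+s) ε θ := by simp [circleMap]; ring
  have hpow : circleMap α ε θ - α = circleMap (α+s) ε θ - (α+s) := by simp [circleMap]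
  rw [harg, hpow]

lemma aux_meromorphicAt_shift {f : ℂ → ℂ} {s α : ℂ} (h : MeromorphicAt f (α + s)) :
    MeromorphicAt (fun z => f (z + s)) α := by
  obtain ⟨n, hn⟩ := h
  refine ⟨n, ?_⟩
  have hcomp : AnalyticAt ℂ ((fun w => (w - (α + s)) ^ n • f w) ∘ (fun z : ℂ => z + s)) α :=
    AnalyticAt.comp (g := fun w => (w - (α + s)) ^ n • f w) (f := fun z : ℂ => z + s)
      (x := α) hn (by exact ((analyticAt_id).add analyticAt_const : AnalyticAt ℂ (fun z : ℂ => z + s) α))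
  have he : ((fun w => (w - (α + s)) ^ n • f w) ∘ (fun z : ℂ => z + s))
      = fun z => (z - α)^n • f (z + s) := by
    funext z
    simp only [Function.comp]
    rw [show z + s - (α + s) = z - α from by ring]
  rwa [he] at hcomp

lemma aux_meromorphicAt_shift_iff {f : ℂ → ℂ} {s α : ℂ} :
    MeromorphicAt (fun z => f (z + s)) α ↔ MeromorphicAt f (α + s) := by
  constructor
  · intro h
    have h' : MeromorphicAt (fun z => f (z + s)) ((α + s) + -s) := by
      rw [add_neg_cancel_right]; exact h
    have := aux_meromorphicAt_shift h'
    simpa using this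
  · exact aux_meromorphicAt_shift

lemma aux_isPole_shift_iff {f : ℂ → ℂ} {s α : ℂ} :
    IsPole (fun z => f (z + s)) α ↔ IsPole f (α + s) := by
  unfold IsPole
  rw [aux_meromorphicAt_shift_iff]
  simp_rw [aux_laurentCoeff_shift]

end Aux2

/-- applying the difference operator increments the polar dispersion. -/
theorem statement2 (l1 l2 s : ℂ) (hl1 : l1 ≠ 0) (hl2 : l2 ≠ 0)
    (hratio : ∀ r : ℝ, l1 / l2 ≠ (r : ℂ))
    (hs : ∀ a b : ℚ, s ≠ (a : ℂ) * l1 + (b : ℂ) * l2)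
    (a : ℂ → ℂ) (ha : IsElliptic (latticeGen l1 l2) a)
    (hnonconst : ∃ z w : ℂ, ¬ IsPole a z ∧ ¬ IsPole a w ∧ a z ≠ a w)
    (hhaspole : ∃ p : ℂ, IsPole a p)
    (N : ℕ)
    (hN : ∃ p₀ : ℂ, IsPole a p₀ ∧ IsPole a (p₀ + (N : ℂ) * s))
    (hNmax : ∀ m : ℤ, (N : ℤ) < m → ¬ ∃ p : ℂ, IsPole a p ∧ IsPole a (p + (m : ℂ) * s)) :
    (∃ p : ℂ, IsPole (fun z => a (z + s) - a z) p ∧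
        IsPole (fun z => a (z + s) - a z) (p + ((N : ℂ) + 1) * s)) ∧
    ∀ m : ℤ, (N : ℤ) + 1 < m →
      ¬ ∃ p : ℂ, IsPole (fun z => a (z + s) - a z) p ∧
          IsPole (fun z => a (z + s) - a z) (p + (m : ℂ) * s) := by
  have hmer : ∀ z : ℂ, MeromorphicAt a z := ha.1
  have hmerF : ∀ x : ℂ, MeromorphicAt (fun z => a (z + s) - a z) x := fun x =>
    (aux_meromorphicAt_shift (hmer (x + s))).sub (hmer x)
  have hcoeff : ∀ x : ℂ, ∀ j : ℕ, 1 ≤ j →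
      laurentCoeff (fun z => a (z + s) - a z) x j
        = laurentCoeff a (x + s) j - laurentCoeff a x j := by
    intro x j hj
    rw [aux_laurentCoeff_sub (aux_meromorphicAt_shift (hmer (x+s))) (hmer x) j hj,
      aux_laurentCoeff_shift]
  have hvanish : ∀ x : ℂ, ¬ IsPole a x → ∀ j : ℕ, 1 ≤ j → laurentCoeff a x j = 0 := by
    intro x hx j hj
    by_contra hne
    exact hx ⟨hmer x, j, hj, hne⟩
  obtain ⟨p₀, hp₀, hpN⟩ := hN
  constructor
  · refine ⟨p₀ - s, ⟨hmerF _, ?_⟩, ?_⟩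
    · have h1 : ¬ IsPole a (p₀ - s) := by
        intro hbad
        refine hNmax (N+1) (by omega) ⟨p₀ - s, hbad, ?_⟩
        rw [show (p₀ - s) + (((N:ℤ)+1 : ℤ):ℂ) * s = p₀ + (N:ℂ) * s from by push_cast; ring]
        exact hpN
      obtain ⟨j, hj, hne⟩ := hp₀.2
      refine ⟨j, hj, ?_⟩
      rw [hcoeff _ j hj, show p₀ - s + s = p₀ from by ring, hvanish _ h1 j hj, sub_zero]
      exact hne
    · rw [show p₀ - s + ((N:ℂ)+1) * s = p₀ + (N:ℂ) * s from by ring]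
      refine ⟨hmerF _, ?_⟩
      have h2 : ¬ IsPole a (p₀ + (N:ℂ)*s + s) := by
        intro hbad
        refine hNmax (N+1) (by omega) ⟨p₀, hp₀, ?_⟩
        rw [show p₀ + (((N:ℤ)+1 : ℤ):ℂ) * s = p₀ + (N:ℂ)*s + s from by push_cast; ring]
        exact hbad
      obtain ⟨j, hj, hne⟩ := hpN.2
      refine ⟨j, hj, ?_⟩
      rw [hcoeff _ j hj, hvanish _ h2 j hj, zero_sub]
      exact neg_ne_zero.2 hne
  · rintro m hm ⟨p, hp1, hp2⟩
    have key : ∀ x : ℂ, IsPole (fun z => a (z+s) - a z) x → IsPole a x ∨ IsPole a (x + s) := by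
      intro x hx
      by_contra hcon
      push_neg at hcon
      obtain ⟨j, hj, hne⟩ := hx.2
      exact hne (by
        rw [hcoeff x j hj, hvanish _ hcon.2 j hj, hvanish _ hcon.1 j hj, sub_zero])
    rcases key p hp1 with h1 | h1 <;> rcases key _ hp2 with h2 | h2
    · exact hNmax m (by omega) ⟨p, h1, h2⟩
    · refine hNmax (m+1) (by omega) ⟨p, h1, ?_⟩
      rw [show p + ((m+1 : ℤ):ℂ) * s = p + (m:ℂ)*s + s from by push_cast; ring]
      exact h2
    · refine hNmax (m-1) (by omega) ⟨p + s, h1, ?_⟩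
      rw [show p + s + ((m-1 : ℤ):ℂ) * s = p + (m:ℂ)*s from by push_cast; ring]
      exact h2
    · refine hNmax m (by omega) ⟨p + s, h1, ?_⟩
      rw [show p + s + ((m : ℤ):ℂ) * s = p + (m:ℂ)*s + s from by push_cast; ring]
      exact h2
end

section
/- If an elliptic function f is summable, then ores(f, β, j) = 0 for every β ∈ ℂ and every integer j ≥ 1. -/
open Complex Metric Filter Set Topology


open Complex

section AuxLemmas


noncomputable def lFun (f : ℂ → ℂ) (α : ℂ) (j : ℕ) (ε : ℝ) : ℂ :=
  (2 * (Real.pi : ℂ) * Complex.I)⁻¹ * ∮ z in C(α, ε), f z * (z - α) ^ (j - 1)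

lemma limUnder_eq_of_ev {F : ℝ → ℂ} {c : ℂ}
    (h : ∀ᶠ ε in nhdsWithin (0:ℝ) (Set.Ioi 0), F ε = c) :
    limUnder (nhdsWithin (0:ℝ) (Set.Ioi 0)) F = c :=
  Filter.Tendsto.limUnder_eq (Filter.Tendsto.congr' (Filter.EventuallyEq.symm h) tendsto_const_nhds)

/-- On a small circle, the coefficient functional of a meromorphic function is eventually
constant. -/
lemma evConst {g : ℂ → ℂ} {α : ℂ} (j : ℕ) (hj : 1 ≤ j) (hg : MeromorphicAt g α) :
    ∃ c : ℂ, ∀ᶠ ε in nhdsWithin (0:ℝ) (Set.Ioi 0), lFun g α j ε = c := by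
  obtain ⟨n, hn⟩ := hg
  set h : ℂ → ℂ := fun z => (z - α) ^ n * g z with hh
  have hne : AnalyticAt ℂ h α := by simpa [hh, smul_eq_mul] using hn
  obtain ⟨R, hR, hRball⟩ : ∃ R > 0, ∀ z ∈ ball α R, AnalyticAt ℂ h z := by
    have := hne.eventually_analyticAt
    rw [Metric.eventually_nhds_iff_ball] at this
    exact this
  set m : ℤ := (j : ℤ) - 1 - n with hm
  -- on any sphere of radius ε>0 the integrand is h z * (z-α)^m
  have key : ∀ ε : ℝ, 0 < ε →
      lFun g α j ε = (2 * (Real.pi : ℂ) * Complex.I)⁻¹ *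
        ∮ z in C(α, ε), h z * (z - α) ^ m := by
    intro ε hε
    unfold lFun
    congr 1
    apply circleIntegral.integral_congr hε.le
    intro z hz
    have hzα : z ≠ α := ne_of_mem_sphere hz hε.ne'
    have hzs : (z - α) ≠ 0 := sub_ne_zero_of_ne hzα
    simp only
    have e1 : h z * (z - α) ^ m = g z * (z - α) ^ ((n:ℤ) + m) := by
      rw [zpow_add₀ hzs, hh]
      simp only [← zpow_natCast (z - α) n]
      ring
    have e2 : ((n:ℤ) + m) = ((j - 1 : ℕ) : ℤ) := by rw [hm]; omega
    rw [e1, e2, zpow_natCast]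
  have hdiff : ∀ ε : ℝ, 0 < ε → ε < R → DifferentiableOn ℂ h (closedBall α ε) := by
    intro ε h0 hεR z hz
    exact ((hRball z (closedBall_subset_ball hεR hz)).differentiableAt).differentiableWithinAt
  rcases le_or_gt 0 m with hm0 | hm0
  · -- integrand analytic, integral zero
    refine ⟨0, ?_⟩
    filter_upwards [Ioo_mem_nhdsGT_of_mem (Set.left_mem_Ico.2 hR)] with ε hε
    rw [key ε hε.1]
    have : (∮ z in C(α, ε), h z * (z - α) ^ m) = 0 := by
      have heq : EqOn (fun z => h z * (z - α) ^ m) (fun z => h z * (z - α) ^ m.toNat)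
          (sphere α ε) := by
        intro z _; simp only; rw [← zpow_natCast (z - α) m.toNat, Int.toNat_of_nonneg hm0]
      rw [circleIntegral.integral_congr hε.1.le heq]
      apply circleIntegral_eq_zero_of_differentiable_on_off_countable hε.1.le countable_empty
      · intro z hz
        exact (((hRball z (closedBall_subset_ball hε.2 hz)).mul
          ((analyticAt_id.sub analyticAt_const).pow _)).continuousAt).continuousWithinAt
      · intro z hz
        exact ((hRball z (ball_subset_ball hε.2.le hz.1)).mul
          ((analyticAt_id.sub analyticAt_const).pow _)).differentiableAt
    rw [this, mul_zero]
  · -- negative power: cauchy power series coefficient, independent of radius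
    set k : ℕ := (-m - 1).toNat with hk
    have hmk : m = -((k : ℤ) + 1) := by rw [hk]; omega
    have hval : ∀ ε : ℝ, 0 < ε → ε < R →
        lFun g α j ε = cauchyPowerSeries h α ε k (fun _ => 1) := by
      intro ε h0 hεR
      rw [key ε h0, cauchyPowerSeries_apply]
      rw [smul_eq_mul]
      congr 1
      apply circleIntegral.integral_congr h0.le
      intro z hz
      have hzα : z ≠ α := ne_of_mem_sphere hz h0.ne'
      have hzs : (z - α) ≠ 0 := sub_ne_zero_of_ne hzα
      simp only [smul_eq_mul, one_div]
      rw [hmk, zpow_neg, show ((k:ℤ)+1) = ((k+1:ℕ):ℤ) from by push_cast ; ring,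
        zpow_natCast, inv_pow]
      field_simp
      ring
    refine ⟨cauchyPowerSeries h α (R/2) k (fun _ => 1), ?_⟩
    filter_upwards [Ioo_mem_nhdsGT_of_mem (Set.left_mem_Ico.2 hR)] with ε hε
    rw [hval ε hε.1 hε.2]
    have p1 : HasFPowerSeriesAt h (cauchyPowerSeries h α ε) α :=
      ((hdiff ε hε.1 hε.2).hasFPowerSeriesOnBall (R := ⟨ε, hε.1.le⟩)
        (by exact_mod_cast hε.1)).hasFPowerSeriesAt
    have p2 : HasFPowerSeriesAt h (cauchyPowerSeries h α (R/2)) α :=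
      ((hdiff (R/2) (by linarith) (by linarith)).hasFPowerSeriesOnBall (R := ⟨R/2, by linarith⟩)
        (by exact_mod_cast (by linarith : (0:ℝ) < R/2))).hasFPowerSeriesAt
    rw [p1.eq_formalMultilinearSeries p2]

/-- If `g` is analytic on a ball around `α` and `j ≥ 1`, the `j`-th Laurent coefficient
integrals eventually vanish. -/
lemma evZero {g : ℂ → ℂ} {α : ℂ} {R : ℝ} (j : ℕ) (hj : 1 ≤ j) (hR : 0 < R)
    (han : ∀ z ∈ ball α R, AnalyticAt ℂ g z) :
    ∀ᶠ ε in nhdsWithin (0:ℝ) (Set.Ioi 0), lFun g α j ε = 0 := by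
  filter_upwards [Ioo_mem_nhdsGT_of_mem (Set.left_mem_Ico.2 hR)] with ε hε
  unfold lFun
  have : (∮ z in C(α, ε), g z * (z - α) ^ (j-1)) = 0 := by
    apply circleIntegral_eq_zero_of_differentiable_on_off_countable hε.1.le countable_empty
    · intro z hz
      exact (((han z (closedBall_subset_ball hε.2 hz)).mul
        ((analyticAt_id.sub analyticAt_const).pow _)).continuousAt).continuousWithinAt
    · intro z hz
      exact ((han z (ball_subset_ball hε.2.le hz.1)).mul
        ((analyticAt_id.sub analyticAt_const).pow _)).differentiableAt
  rw [this, mul_zero]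

/-- Translation identity for the coefficient integrals. -/
lemma lFun_shift (g : ℂ → ℂ) (α t : ℂ) (j : ℕ) (ε : ℝ) :
    lFun (fun z => g (z + t)) α j ε = lFun g (α + t) j ε := by
  unfold lFun
  congr 1
  simp only [circleIntegral, deriv_circleMap]
  apply intervalIntegral.integral_congr
  intro θ _
  have : circleMap (α + t) ε θ = circleMap α ε θ + t := by
    simp [circleMap]; ring
  simp only [this, smul_eq_mul]
  ring_nf

lemma laurentCoeff_eq_of_ev {g : ℂ → ℂ} {α : ℂ} {j : ℕ} {c : ℂ}
    (h : ∀ᶠ ε in nhdsWithin (0:ℝ) (Set.Ioi 0), lFun g α j ε = c) :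
    laurentCoeff g α j = c :=
  limUnder_eq_of_ev h

/-- punctured-ball analyticity around any point of a meromorphic function -/
lemma punctured_ball {g : ℂ → ℂ} (hg : ∀ z : ℂ, MeromorphicAt g z) (x : ℂ) :
    ∃ R > 0, ∀ z ∈ ball x R, z ≠ x → AnalyticAt ℂ g z := by
  have := (hg x).eventually_analyticAt
  rw [eventually_nhdsWithin_iff, Metric.eventually_nhds_iff_ball] at this
  obtain ⟨R, hR, h⟩ := this
  exact ⟨R, hR, fun z hz hzx => h z hz hzx⟩

/-- If `g` is analytic at `x` then the `j`-th coefficient (`j ≥ 1`) vanishes. -/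
lemma laurentCoeff_eq_zero_of_analyticAt {g : ℂ → ℂ} {x : ℂ} {j : ℕ} (hj : 1 ≤ j)
    (hx : AnalyticAt ℂ g x) : laurentCoeff g x j = 0 := by
  obtain ⟨R, hR, hball⟩ : ∃ R > 0, ∀ z ∈ ball x R, AnalyticAt ℂ g z := by
    have := hx.eventually_analyticAt
    rw [Metric.eventually_nhds_iff_ball] at this
    exact this
  exact laurentCoeff_eq_of_ev (evZero j hj hR hball)

/-- Lattice periodicity of Laurent coefficients of an elliptic function. -/
lemma laurentCoeff_periodic {l1 l2 : ℂ} {g : ℂ → ℂ} (hg : IsElliptic (latticeGen l1 l2) g)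
    {lam : ℂ} (hlam : lam ∈ latticeGen l1 l2) (x : ℂ) (j : ℕ) (hj : 1 ≤ j) :
    laurentCoeff g (x + lam) j = laurentCoeff g x j := by
  obtain ⟨R, hR, hball⟩ := punctured_ball hg.1 x
  obtain ⟨c, hc⟩ := evConst j hj (hg.1 x)
  have hshift : ∀ᶠ ε in nhdsWithin (0:ℝ) (Set.Ioi 0), lFun g (x + lam) j ε = lFun g x j ε := by
    filter_upwards [Ioo_mem_nhdsGT_of_mem (Set.left_mem_Ico.2 hR)] with ε hε
    rw [← lFun_shift g x lam j ε]
    unfold lFun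
    congr 1
    apply circleIntegral.integral_congr hε.1.le
    intro z hz
    have hzx : z ≠ x := ne_of_mem_sphere hz hε.1.ne'
    have : AnalyticAt ℂ g z := hball z (by
      rw [mem_ball]
      rw [mem_sphere] at hz
      rw [hz]; exact hε.2) hzx
    simp only
    rw [hg.2 lam hlam z this]
  have : laurentCoeff g (x + lam) j = c :=
    laurentCoeff_eq_of_ev (hshift.mp (hc.mono fun ε h1 h2 => h2.trans h1))
  rw [this, (laurentCoeff_eq_of_ev hc).symm]

/-- Key identity: the Laurent coefficients of the difference `f z = g (z+s) - g z`. -/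
lemma laurentCoeff_diff {g f : ℂ → ℂ} {s : ℂ} (hg : ∀ z : ℂ, MeromorphicAt g z)
    (hrel : ∀ z : ℂ, AnalyticAt ℂ g z → AnalyticAt ℂ g (z + s) → f z = g (z + s) - g z)
    (α : ℂ) (j : ℕ) (hj : 1 ≤ j) :
    laurentCoeff f α j = laurentCoeff g (α + s) j - laurentCoeff g α j := by
  obtain ⟨R₁, hR₁, hb₁⟩ := punctured_ball hg α
  obtain ⟨R₂, hR₂, hb₂⟩ := punctured_ball hg (α + s)
  set R := min R₁ R₂ with hRdef
  have hR : 0 < R := lt_min hR₁ hR₂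
  obtain ⟨c₁, hc₁⟩ := evConst j hj (hg (α + s))
  obtain ⟨c₂, hc₂⟩ := evConst j hj (hg α)
  have hev : ∀ᶠ ε in nhdsWithin (0:ℝ) (Set.Ioi 0),
      lFun f α j ε = lFun g (α + s) j ε - lFun g α j ε := by
    filter_upwards [Ioo_mem_nhdsGT_of_mem (Set.left_mem_Ico.2 hR)] with ε hε
    have han : ∀ z ∈ sphere α ε, AnalyticAt ℂ g z ∧ AnalyticAt ℂ g (z + s) := by
      intro z hz
      have hzα : z ≠ α := ne_of_mem_sphere hz hε.1.ne'
      rw [mem_sphere] at hz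
      constructor
      · exact hb₁ z (by rw [mem_ball, hz]; exact hε.2.trans_le (min_le_left _ _)) hzα
      · refine hb₂ (z + s) ?_ (by simpa using hzα)
        rw [mem_ball]
        have : dist (z + s) (α + s) = dist z α := by
          simp [Complex.dist_eq]
        rw [this, hz]; exact hε.2.trans_le (min_le_right _ _)
    have step1 : lFun f α j ε =
        (2 * (Real.pi : ℂ) * Complex.I)⁻¹ *
          ∮ z in C(α, ε), (g (z + s) * (z - α) ^ (j-1) - g z * (z - α) ^ (j-1)) := by
      unfold lFun
      congr 1
      apply circleIntegral.integral_congr hε.1.le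
      intro z hz
      simp only
      rw [hrel z (han z hz).1 (han z hz).2]
      ring
    have int1 : CircleIntegrable (fun z => g (z + s) * (z - α) ^ (j-1)) α ε := by
      apply ContinuousOn.circleIntegrable hε.1.le
      intro z hz
      have hadd : AnalyticAt ℂ (fun w : ℂ => w + s) z := analyticAt_id.add analyticAt_const
      have hcomp : AnalyticAt ℂ (g ∘ fun w : ℂ => w + s) z :=
        AnalyticAt.comp (by simpa using (han z hz).2) hadd
      have : AnalyticAt ℂ (fun z => g (z + s)) z := by
        exact hcomp
      exact ((this.mul ((analyticAt_id.sub analyticAt_const).pow _)).continuousAt).continuousWithinAt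
    have int2 : CircleIntegrable (fun z => g z * (z - α) ^ (j-1)) α ε := by
      apply ContinuousOn.circleIntegrable hε.1.le
      intro z hz
      exact (((han z hz).1.mul
        ((analyticAt_id.sub analyticAt_const).pow _)).continuousAt).continuousWithinAt
    rw [step1, circleIntegral.integral_sub int1 int2, mul_sub,
      ← lFun_shift g α s j ε]
    rfl
  have h1 : laurentCoeff g (α + s) j = c₁ := laurentCoeff_eq_of_ev hc₁
  have h2 : laurentCoeff g α j = c₂ := laurentCoeff_eq_of_ev hc₂
  have : ∀ᶠ ε in nhdsWithin (0:ℝ) (Set.Ioi 0), lFun f α j ε = c₁ - c₂ := by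
    filter_upwards [hev, hc₁, hc₂] with ε h e1 e2
    rw [h, e1, e2]
  rw [laurentCoeff_eq_of_ev this, h1, h2]

/-- The non-analyticity set of an everywhere-meromorphic function is finite on compacts. -/
lemma nonAnalytic_finite {g : ℂ → ℂ} (hg : ∀ z : ℂ, MeromorphicAt g z) {K : Set ℂ}
    (hK : IsCompact K) : (K ∩ {x : ℂ | ¬ AnalyticAt ℂ g x}).Finite := by
  set S : Set ℂ := {x : ℂ | ¬ AnalyticAt ℂ g x} with hS
  have hSc : IsClosed S := by
    rw [hS]
    exact (isOpen_analyticAt ℂ g).isClosed_compl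
  have hcomp : IsCompact (K ∩ S) := hK.inter_right hSc
  apply hcomp.finite
  rw [isDiscrete_iff_discreteTopology, discreteTopology_subtype_iff]
  intro x hx
  rw [← Filter.eventually_false_iff_eq_bot]
  have h1 : ∀ᶠ y in 𝓝[≠] x ⊓ 𝓟 (K ∩ S), AnalyticAt ℂ g y :=
    Filter.Eventually.filter_mono inf_le_left (hg x).eventually_analyticAt
  have h2 : ∀ᶠ y in 𝓝[≠] x ⊓ 𝓟 (K ∩ S), y ∈ K ∩ S :=
    Filter.Eventually.filter_mono inf_le_right (Filter.eventually_principal.2 fun y hy => hy)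
  filter_upwards [h1, h2] with y hy1 hy2
  exact hy2.2 hy1

/-- Reduction to a compact fundamental domain. -/
lemma lattice_reduce {l1 l2 : ℂ} (hl2 : l2 ≠ 0) (hratio : ∀ r : ℝ, l1 / l2 ≠ (r : ℂ)) :
    ∃ K : Set ℂ, IsCompact K ∧ ∀ x : ℂ, ∃ lam ∈ latticeGen l1 l2, x - lam ∈ K := by
  have hli : LinearIndependent ℝ ![l1, l2] := by
    rw [linearIndependent_fin2]
    refine ⟨by simpa using hl2, fun a ha => ?_⟩
    simp only [Matrix.cons_val_one, Matrix.head_cons, Matrix.cons_val_zero] at ha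
    apply hratio a
    rw [← ha, Complex.real_smul, mul_div_assoc, div_self hl2, mul_one]
  have hcard : Fintype.card (Fin 2) = Module.finrank ℝ ℂ := by
    simp [Complex.finrank_real_complex]
  set b : Module.Basis (Fin 2) ℝ ℂ := basisOfLinearIndependentOfCardEqFinrank hli hcard with hb
  have hbe : ∀ i, b i = ![l1, l2] i := by
    intro i; rw [hb, coe_basisOfLinearIndependentOfCardEqFinrank]
  refine ⟨(fun p : ℝ × ℝ => p.1 • l1 + p.2 • l2) '' (Icc 0 1 ×ˢ Icc 0 1),
    ((isCompact_Icc.prod isCompact_Icc).image (by fun_prop)), fun x => ?_⟩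
  set r0 : ℝ := b.repr x 0 with hr0
  set r1 : ℝ := b.repr x 1 with hr1
  have hx : x = r0 • l1 + r1 • l2 := by
    have := b.sum_repr x
    rw [Fin.sum_univ_two, hbe 0, hbe 1] at this
    simpa [hr0, hr1] using this.symm
  refine ⟨(⌊r0⌋ : ℂ) * l1 + (⌊r1⌋ : ℂ) * l2, ⟨⌊r0⌋, ⌊r1⌋, rfl⟩, ?_⟩
  refine ⟨(Int.fract r0, Int.fract r1), ⟨⟨Int.fract_nonneg _, (Int.fract_lt_one _).le⟩,
    ⟨Int.fract_nonneg _, (Int.fract_lt_one _).le⟩⟩, ?_⟩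
  simp only [Int.fract]
  rw [hx]
  simp only [Complex.real_smul]
  push_cast
  ring

/-- Finite-support telescoping sums over ℤ vanish. -/
lemma tsum_telescope_zero {b : ℤ → ℂ} (hb : {n : ℤ | b n ≠ 0}.Finite) :
    ∑' n : ℤ, (b (n + 1) - b n) = 0 := by
  obtain ⟨N, hN⟩ : ∃ N : ℕ, ∀ n : ℤ, b n ≠ 0 → n.natAbs ≤ N := by
    obtain ⟨N, hN⟩ := (hb.image fun n => n.natAbs).bddAbove
    exact ⟨N, fun n hn => hN ⟨n, hn, rfl⟩⟩
  set l : ℤ := -(N + 1) with hl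
  set u : ℤ := (N + 1) with hu
  have hzero : ∀ n : ℤ, N < n.natAbs → b n = 0 := by
    intro n hn
    by_contra h
    have := hN n h
    omega
  have hout : ∀ n : ℤ, n ∉ Finset.Icc l u → b (n + 1) - b n = 0 := by
    intro n hn
    rw [Finset.mem_Icc] at hn
    have h1 : b n = 0 := by
      apply hzero; rw [hl, hu] at hn; omega
    have h2 : b (n + 1) = 0 := by
      apply hzero; rw [hl, hu] at hn; omega
    rw [h1, h2, sub_zero]
  rw [tsum_eq_sum (s := Finset.Icc l u) hout, Finset.sum_sub_distrib]
  have hmap : ∑ n ∈ Finset.Icc l u, b (n + 1) = ∑ n ∈ Finset.Icc (l+1) (u+1), b n := by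
    rw [← Finset.map_add_right_Icc l u 1, Finset.sum_map]
    rfl
  rw [hmap]
  have e1 : Finset.Icc (l+1) (u+1) = insert (u+1) (Finset.Icc (l+1) u) := by
    ext n; simp [Finset.mem_Icc, Finset.mem_insert]; omega
  have e2 : Finset.Icc l u = insert l (Finset.Icc (l+1) u) := by
    ext n; simp [Finset.mem_Icc, Finset.mem_insert]; omega
  rw [e1, e2, Finset.sum_insert (by simp [Finset.mem_Icc]),
    Finset.sum_insert (by simp [Finset.mem_Icc])]
  have hbu : b (u + 1) = 0 := by apply hzero; rw [hu]; omega
  have hbl : b l = 0 := by apply hzero; rw [hl, hu]; omega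
  rw [hbu, hbl]
  ring


end AuxLemmas

/-- if an elliptic function is summable then all its orbital residues vanish. -/
theorem statement4 (l1 l2 s : ℂ) (hl1 : l1 ≠ 0) (hl2 : l2 ≠ 0)
    (hratio : ∀ r : ℝ, l1 / l2 ≠ (r : ℂ))
    (hs : ∀ a b : ℚ, s ≠ (a : ℂ) * l1 + (b : ℂ) * l2)
    (f : ℂ → ℂ) (hf : IsElliptic (latticeGen l1 l2) f)
    (hsum : IsSummableE (latticeGen l1 l2) s f) :
    ∀ β : ℂ, ∀ j : ℕ, 1 ≤ j → ores s f β j = 0 := by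
  intro β j hj
  obtain ⟨g, hgell, hrel⟩ := hsum
  have hgm : ∀ z : ℂ, MeromorphicAt g z := hgell.1
  set b : ℤ → ℂ := fun n => laurentCoeff g (β + (n : ℂ) * s) j with hbdef
  -- each orbital coefficient telescopes
  have hstep : ∀ n : ℤ, laurentCoeff f (β + (n : ℂ) * s) j = b (n + 1) - b n := by
    intro n
    have h := laurentCoeff_diff hgm hrel (β + (n : ℂ) * s) j hj
    rw [h, hbdef]
    simp only
    have : β + (n : ℂ) * s + s = β + ((n + 1 : ℤ) : ℂ) * s := by push_cast; ring
    rw [this]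
  -- finiteness of the support of b
  obtain ⟨K, hK, hred⟩ := lattice_reduce hl2 hratio
  have hredn : ∀ n : ℤ, ∃ lam ∈ latticeGen l1 l2, (β + (n : ℂ) * s) - lam ∈ K :=
    fun n => hred _
  choose lam hlamΛ hlamK using hredn
  set r : ℤ → ℂ := fun n => (β + (n : ℂ) * s) - lam n with hrdef
  have hbr : ∀ n : ℤ, b n = laurentCoeff g (r n) j := by
    intro n
    have : β + (n : ℂ) * s = r n + lam n := by rw [hrdef]; ring
    rw [hbdef]
    simp only
    rw [this, laurentCoeff_periodic hgell (hlamΛ n) (r n) j hj]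
  have hsupp : {n : ℤ | b n ≠ 0}.Finite := by
    have himg : (fun n => r n) '' {n : ℤ | b n ≠ 0} ⊆ K ∩ {x : ℂ | ¬ AnalyticAt ℂ g x} := by
      rintro x ⟨n, hn, rfl⟩
      refine ⟨hlamK n, fun ha => hn ?_⟩
      rw [hbr n]
      exact laurentCoeff_eq_zero_of_analyticAt hj ha
    have hinj : Set.InjOn (fun n => r n) {n : ℤ | b n ≠ 0} := by
      intro n _ m _ hnm
      by_contra hne
      simp only [hrdef] at hnm
      obtain ⟨p1, p2, hp⟩ := hlamΛ n
      obtain ⟨q1, q2, hq⟩ := hlamΛ m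
      have hd : ((n : ℂ) - m) * s = ((p1 : ℂ) - q1) * l1 + ((p2 : ℂ) - q2) * l2 := by
        have hlam : lam n - lam m = ((n : ℂ) - m) * s := by linear_combination -hnm
        rw [hp, hq] at hlam
        linear_combination -hlam
      have hdne : ((n : ℂ) - (m : ℂ)) ≠ 0 := by
        rw [sub_ne_zero]
        exact_mod_cast hne
      apply hs ((p1 - q1 : ℚ) / ((n : ℚ) - m)) ((p2 - q2 : ℚ) / ((n : ℚ) - m))
      push_cast
      rw [div_mul_eq_mul_div, div_mul_eq_mul_div, ← add_div, eq_div_iff hdne]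
      linear_combination hd
    exact Set.Finite.of_finite_image
      ((nonAnalytic_finite hgm hK).subset himg) hinj
  rw [ores]
  rw [tsum_congr hstep]
  exact tsum_telescope_zero hsupp
end

section
/- Let f ∈ ℂ(x) be a rational function, viewed as a meromorphic function on ℂ. Then there exists a rational function g ∈ ℂ(x) with g(x + 1) − g(x) = f(x) (as rational functions) if and only if for every β ∈ ℂ and every integer j ≥ 1 the discrete residue dres(f, β, j) = ∑_{n ∈ ℤ} c_j(f, β + n) equals 0, where the sum has only finitely many nonzero terms. -/
noncomputable section S13aux

open Polynomial Filter Topology Metric MeasureTheory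

namespace S13

/-- The integrand family. -/
def lcFun (F : ℂ → ℂ) (α : ℂ) (j : ℕ) (ε : ℝ) : ℂ :=
  (2 * (Real.pi : ℂ) * Complex.I)⁻¹ * ∮ z in C(α, ε), F z * (z - α) ^ (j - 1)

def HasLC (F : ℂ → ℂ) (α : ℂ) (j : ℕ) (L : ℂ) : Prop :=
  Tendsto (lcFun F α j) (nhdsWithin (0 : ℝ) (Set.Ioi 0)) (nhds L)

theorem HasLC.laurentCoeff_eq {F : ℂ → ℂ} {α : ℂ} {j : ℕ} {L : ℂ}
    (h : HasLC F α j L) : laurentCoeff F α j = L :=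
  h.limUnder_eq

/-- Congruence off a finite set. -/
theorem HasLC.congr_off_finite {F G : ℂ → ℂ} {α : ℂ} {j : ℕ} {L : ℂ} {s : Set ℂ}
    (hs : s.Finite) (hFG : ∀ z ∉ s, F z = G z) (h : HasLC F α j L) : HasLC G α j L := by
  refine h.congr' ?_
  filter_upwards [self_mem_nhdsWithin] with ε (hε : ε ∈ Set.Ioi (0:ℝ))
  unfold lcFun
  congr 1
  refine intervalIntegral.integral_congr_ae ?_
  have hc : (circleMap α ε ⁻¹' s).Countable :=
    hs.countable.preimage_circleMap α (ne_of_gt hε)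
  filter_upwards [hc.ae_notMem volume] with θ hθ _
  rw [hFG _ hθ]

theorem hasLC_zero_of_differentiable {F : ℂ → ℂ} {α : ℂ} {δ : ℝ} (hδ : 0 < δ)
    (hF : ∀ z ∈ ball α δ, DifferentiableAt ℂ F z) (j : ℕ) : HasLC F α j 0 := by
  refine Tendsto.congr' ?_ tendsto_const_nhds
  filter_upwards [Ioo_mem_nhdsGT_of_mem ⟨le_refl (0:ℝ), hδ⟩] with ε hε
  have hdiff : ∀ z ∈ closedBall α ε, DifferentiableAt ℂ
      (fun z => F z * (z - α) ^ (j - 1)) z := by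
    intro z hz
    have hz' : z ∈ ball α δ := closedBall_subset_ball hε.2 hz
    exact (hF z hz').mul (((differentiableAt_id.sub_const α).pow _))
  have h0 : (∮ z in C(α, ε), F z * (z - α) ^ (j - 1)) = 0 := by
    refine Complex.circleIntegral_eq_zero_of_differentiable_on_off_countable hε.1.le
      Set.countable_empty (fun z hz => (hdiff z hz).continuousAt.continuousWithinAt)
      (fun z hz => hdiff z (ball_subset_closedBall hz.1)) 
  simp [lcFun, h0]

theorem two_pi_I_ne_zero' : (2 * (Real.pi : ℂ) * Complex.I) ≠ 0 := by
  simp [Real.pi_ne_zero, Complex.I_ne_zero]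

/-- Value at the pole itself. -/
theorem hasLC_pole_self {k : ℕ} (hk : 1 ≤ k) (cc α : ℂ) {j : ℕ} (hj : 1 ≤ j) :
    HasLC (fun z => cc * ((z - α) ^ k)⁻¹) α j (if k = j then cc else 0) := by
  refine Tendsto.congr' ?_ tendsto_const_nhds
  filter_upwards [self_mem_nhdsWithin] with ε (hε : ε ∈ Set.Ioi (0:ℝ))
  simp only [Set.mem_Ioi] at hε
  have h1 : (∮ z in C(α, ε), (fun z => cc * ((z - α) ^ k)⁻¹) z * (z - α) ^ (j - 1))
      = ∮ z in C(α, ε), cc • (z - α) ^ ((j : ℤ) - 1 - k) := by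
    refine circleIntegral.integral_congr hε.le (fun z hz => ?_)
    show cc * ((z - α) ^ k)⁻¹ * (z - α) ^ (j - 1) = cc • (z - α) ^ ((j : ℤ) - 1 - k)
    have hzα : z - α ≠ 0 := by
      rw [sub_ne_zero]
      rintro rfl
      rw [mem_sphere, dist_self] at hz
      exact (ne_of_gt hε) hz.symm
    have h2 : ((z - α) ^ k)⁻¹ = (z - α) ^ (-(k : ℤ)) := by
      rw [zpow_neg, zpow_natCast]
    have h3 : (z - α) ^ (j - 1) = (z - α) ^ ((j : ℤ) - 1) := by
      rw [← zpow_natCast, Nat.cast_sub hj, Nat.cast_one]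
    rw [smul_eq_mul, h2, h3, mul_assoc, ← zpow_add₀ hzα]
    ring_nf
  rw [lcFun, h1, circleIntegral.integral_smul]
  by_cases hkj : k = j
  · subst hkj
    have : ((k : ℤ) - 1 - k) = -1 := by ring
    rw [this, if_pos rfl]
    have h4 : (∮ z in C(α, ε), (z - α) ^ (-1 : ℤ)) = 2 * Real.pi * Complex.I := by
      have := circleIntegral.integral_sub_inv_of_mem_ball (mem_ball_self hε : α ∈ ball α ε)
      rw [← this]
      refine circleIntegral.integral_congr hε.le (fun z hz => ?_)
      simp [zpow_neg_one]
    rw [h4, smul_eq_mul]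
    rw [← mul_assoc]
    rw [mul_comm ((2 * (Real.pi:ℂ) * Complex.I))⁻¹ cc, mul_assoc,
      inv_mul_cancel₀ two_pi_I_ne_zero', mul_one]
  · have hne : ((j : ℤ) - 1 - k) ≠ -1 := by
      intro h
      apply hkj
      have : (j : ℤ) = k := by omega
      exact_mod_cast this.symm
    rw [circleIntegral.integral_sub_zpow_of_ne hne, if_neg (fun h => hkj h), smul_zero, mul_zero]

theorem hasLC_pole_other {γ α : ℂ} (hγ : γ ≠ α) (k : ℕ) (cc : ℂ) (j : ℕ) :
    HasLC (fun z => cc * ((z - γ) ^ k)⁻¹) α j 0 := by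
  refine hasLC_zero_of_differentiable (δ := dist α γ) (dist_pos.mpr (Ne.symm hγ)) ?_ j
  intro z hz
  have hzγ : z - γ ≠ 0 := by
    rw [sub_ne_zero]
    rintro rfl
    rw [mem_ball] at hz
    rw [dist_comm] at hz
    exact lt_irrefl _ hz
  exact (differentiableAt_const cc).mul
    (((differentiableAt_id.sub_const γ).pow k).inv (pow_ne_zero k hzγ))

theorem hasLC_poly (p : Polynomial ℂ) (α : ℂ) (j : ℕ) :
    HasLC (fun z => p.eval z) α j 0 := by
  refine hasLC_zero_of_differentiable one_pos (fun z _ => ?_) j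
  exact p.differentiable.differentiableAt


/-- Functions continuous away from a finite set. -/
def Nice (F : ℂ → ℂ) : Prop := ∃ s : Set ℂ, s.Finite ∧ ∀ z ∉ s, ContinuousAt F z

theorem nice_pole (γ : ℂ) (k : ℕ) (cc : ℂ) : Nice (fun z => cc * ((z - γ) ^ k)⁻¹) := by
  refine ⟨{γ}, Set.finite_singleton γ, fun z hz => ?_⟩
  have hzγ : z - γ ≠ 0 := sub_ne_zero.mpr (by simpa using hz)
  exact continuousAt_const.mul
    (((continuousAt_id.sub continuousAt_const).pow k).inv₀ (pow_ne_zero k hzγ))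

theorem nice_poly (p : Polynomial ℂ) : Nice (fun z => p.eval z) :=
  ⟨∅, Set.finite_empty, fun z _ => p.continuous.continuousAt⟩

theorem Nice.eventually_circleIntegrable {F : ℂ → ℂ} (hF : Nice F) (α : ℂ) (j : ℕ) :
    ∀ᶠ ε in nhdsWithin (0:ℝ) (Set.Ioi 0),
      CircleIntegrable (fun z => F z * (z - α) ^ (j - 1)) α ε := by
  obtain ⟨s, hs, hcont⟩ := hF
  -- find δ > 0 smaller than the distance from α to any other point of s
  obtain ⟨δ, hδ, hδ'⟩ : ∃ δ > (0:ℝ), ∀ z ∈ s, z ≠ α → δ ≤ dist z α := by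
    classical
    set t := hs.toFinset.filter (· ≠ α) with ht
    rcases t.eq_empty_or_nonempty with h | h
    · exact ⟨1, one_pos, fun z hz hzα => absurd (Finset.eq_empty_iff_forall_notMem.mp h z
        (Finset.mem_filter.mpr ⟨hs.mem_toFinset.mpr hz, hzα⟩)) (fun hc => hc)⟩
    · refine ⟨t.inf' h (fun z => dist z α), ?_, ?_⟩
      · rw [gt_iff_lt, Finset.lt_inf'_iff]
        intro z hz
        exact dist_pos.mpr (Finset.mem_filter.mp hz).2
      · intro z hz hzα
        exact Finset.inf'_le _ (Finset.mem_filter.mpr ⟨hs.mem_toFinset.mpr hz, hzα⟩)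
  filter_upwards [Ioo_mem_nhdsGT_of_mem ⟨le_refl (0:ℝ), hδ⟩] with ε hε
  refine ContinuousOn.circleIntegrable hε.1.le ?_
  intro z hz
  have hzs : z ∉ s := by
    intro hzs
    by_cases hzα : z = α
    · subst hzα
      rw [mem_sphere, dist_self] at hz
      exact (ne_of_gt hε.1) hz.symm
    · have h1 := hδ' z hzs hzα
      rw [mem_sphere] at hz
      rw [hz] at h1
      linarith [hε.2]
  exact ((hcont z hzs).mul (((continuousAt_id.sub continuousAt_const).pow _))).continuousWithinAt

theorem HasLC.add {F G : ℂ → ℂ} {α : ℂ} {j : ℕ} {L M : ℂ}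
    (hF' : Nice F) (hG' : Nice G) (hF : HasLC F α j L) (hG : HasLC G α j M) :
    HasLC (fun z => F z + G z) α j (L + M) := by
  refine Tendsto.congr' ?_ (Filter.Tendsto.add hF hG)
  filter_upwards [hF'.eventually_circleIntegrable α j, hG'.eventually_circleIntegrable α j]
    with ε hFi hGi
  unfold lcFun
  rw [← mul_add]
  congr 1
  have : (∮ z in C(α, ε), ((fun z => F z + G z) z * (z - α) ^ (j - 1)))
      = ∮ z in C(α, ε), (F z * (z - α) ^ (j - 1) + G z * (z - α) ^ (j - 1)) := by
    congr 1
    funext z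
    ring
  rw [this]
  simp only [circleIntegral, smul_add]
  rw [intervalIntegral.integral_add hFi.out hGi.out]

theorem Nice.add {F G : ℂ → ℂ} (hF : Nice F) (hG : Nice G) :
    Nice (fun z => F z + G z) := by
  obtain ⟨s, hs, hs'⟩ := hF
  obtain ⟨t, ht, ht'⟩ := hG
  exact ⟨s ∪ t, hs.union ht, fun z hz =>
    (hs' z (fun h => hz (Set.mem_union_left _ h))).add
    (ht' z (fun h => hz (Set.mem_union_right _ h)))⟩

theorem hasLC_sum (γ : ℕ → ℂ) (k : ℕ → ℕ) (c : ℕ → ℂ) (N : ℕ)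
    (hk : ∀ i ∈ Finset.range N, 1 ≤ k i) (α : ℂ) {j : ℕ} (hj : 1 ≤ j) :
    HasLC (fun z => ∑ i ∈ Finset.range N, c i * ((z - γ i) ^ (k i))⁻¹) α j
      (∑ i ∈ Finset.range N, if γ i = α ∧ k i = j then c i else 0)
    ∧ Nice (fun z => ∑ i ∈ Finset.range N, c i * ((z - γ i) ^ (k i))⁻¹) := by
  classical
  induction N with
  | zero =>
    simp only [Finset.range_zero, Finset.sum_empty]
    exact ⟨by simpa using hasLC_poly 0 α j, by simpa using nice_poly 0⟩
  | succ n ih =>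
    have hk' : ∀ i ∈ Finset.range n, 1 ≤ k i := fun i hi =>
      hk i (Finset.mem_range.mpr (Nat.lt_succ_of_lt (Finset.mem_range.mp hi)))
    obtain ⟨ih1, ih2⟩ := ih hk'
    have hpiece : HasLC (fun z => c n * ((z - γ n) ^ (k n))⁻¹) α j
        (if γ n = α ∧ k n = j then c n else 0) := by
      by_cases hγ : γ n = α
      · subst hγ
        have := hasLC_pole_self (hk n (Finset.self_mem_range_succ n)) (c n) (γ n) hj
        simpa using this
      · simpa [hγ] using hasLC_pole_other hγ (k n) (c n) j
    have hniceP := nice_pole (γ n) (k n) (c n)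
    have := ih1.add (G := fun z => c n * ((z - γ n) ^ (k n))⁻¹) ih2 hniceP hpiece
    constructor
    · simp only [Finset.sum_range_succ]
      exact this
    · simp only [Finset.sum_range_succ]
      exact ih2.add hniceP


/-! ### Algebraic layer -/

open scoped Polynomial

def base (γ : ℂ) (k : ℕ) : RatFunc ℂ := ((RatFunc.X - RatFunc.C γ)⁻¹) ^ k

def Decomp (f : RatFunc ℂ) (p : ℂ[X]) (N : ℕ) (γ : ℕ → ℂ) (k : ℕ → ℕ) (c : ℕ → ℂ) : Prop :=
  (∀ i ∈ Finset.range N, 1 ≤ k i) ∧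
  f = algebraMap ℂ[X] (RatFunc ℂ) p + ∑ i ∈ Finset.range N, RatFunc.C (c i) * base (γ i) (k i)

theorem base_eq (γ : ℂ) (k : ℕ) :
    base γ k = (algebraMap ℂ[X] (RatFunc ℂ) ((X - Polynomial.C γ) ^ k))⁻¹ := by
  simp [base, map_pow, map_sub, RatFunc.algebraMap_X, RatFunc.algebraMap_C, inv_pow]

theorem term_eq (γ : ℂ) (k : ℕ) (cc : ℂ) :
    RatFunc.C cc * base γ k =
      algebraMap ℂ[X] (RatFunc ℂ) (Polynomial.C cc) /
        algebraMap ℂ[X] (RatFunc ℂ) ((X - Polynomial.C γ) ^ k) := by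
  rw [base_eq, div_eq_mul_inv, RatFunc.algebraMap_C]

theorem eval_coeP (q : ℂ[X]) (z : ℂ) :
    RatFunc.eval (RingHom.id ℂ) z (algebraMap ℂ[X] (RatFunc ℂ) q) = q.eval z := by
  rw [RatFunc.eval_algebraMap]
  rfl

theorem eval₂_id_eq_eval (q : ℂ[X]) (z : ℂ) :
    Polynomial.eval₂ (RingHom.id ℂ) z q = q.eval z := by
  rfl

theorem denom_eval_ne_zero_of_dvd {x : RatFunc ℂ} {q : ℂ[X]} (h : RatFunc.denom x ∣ q)
    {z : ℂ} (hq : q.eval z ≠ 0) :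
    Polynomial.eval₂ (RingHom.id ℂ) z (RatFunc.denom x) ≠ 0 := by
  obtain ⟨r, rfl⟩ := h
  rw [eval₂_id_eq_eval]
  intro h0
  rw [Polynomial.eval_mul] at hq
  exact hq (by rw [h0, zero_mul])

theorem eval_div_poly (a b : ℂ[X]) {z : ℂ} (hb : b.eval z ≠ 0) :
    RatFunc.eval (RingHom.id ℂ) z
      (algebraMap ℂ[X] (RatFunc ℂ) a / algebraMap ℂ[X] (RatFunc ℂ) b)
      = a.eval z / b.eval z := by
  have hb0 : b ≠ 0 := fun h => hb (by simp [h])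
  set x := algebraMap ℂ[X] (RatFunc ℂ) a / algebraMap ℂ[X] (RatFunc ℂ) b with hxdef
  have hx : x * algebraMap ℂ[X] (RatFunc ℂ) b = algebraMap ℂ[X] (RatFunc ℂ) a :=
    div_mul_cancel₀ _ (RatFunc.algebraMap_ne_zero hb0)
  have hdx : Polynomial.eval₂ (RingHom.id ℂ) z (RatFunc.denom x) ≠ 0 :=
    denom_eval_ne_zero_of_dvd (RatFunc.denom_div_dvd a b) hb
  have hdb : Polynomial.eval₂ (RingHom.id ℂ) z
      (RatFunc.denom (algebraMap ℂ[X] (RatFunc ℂ) b)) ≠ 0 := by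
    rw [RatFunc.denom_algebraMap]
    simp
  have hmul := RatFunc.eval_mul (f := RingHom.id ℂ) (a := z) hdx hdb
  rw [hx, eval_coeP, eval_coeP] at hmul
  rw [eq_div_iff hb]
  exact hmul.symm

theorem eval_sum_aux (s : Finset ℕ) (F : ℕ → RatFunc ℂ) (z : ℂ)
    (h : ∀ i ∈ s, Polynomial.eval₂ (RingHom.id ℂ) z (RatFunc.denom (F i)) ≠ 0) :
    Polynomial.eval₂ (RingHom.id ℂ) z (RatFunc.denom (∑ i ∈ s, F i)) ≠ 0 ∧
    RatFunc.eval (RingHom.id ℂ) z (∑ i ∈ s, F i)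
      = ∑ i ∈ s, RatFunc.eval (RingHom.id ℂ) z (F i) := by
  classical
  induction s using Finset.induction with
  | empty => simp [RatFunc.denom_zero]
  | @insert a s hnot ih =>
    have ha := h a (Finset.mem_insert_self a s)
    obtain ⟨ih1, ih2⟩ := ih (fun i hi => h i (Finset.mem_insert_of_mem hi))
    rw [Finset.sum_insert hnot, Finset.sum_insert hnot]
    have hdvd := RatFunc.denom_add_dvd (F a) (∑ i ∈ s, F i)
    constructor
    · intro h0
      have := Polynomial.eval₂_eq_zero_of_dvd_of_eval₂_eq_zero (RingHom.id ℂ) z hdvd h0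
      rw [Polynomial.eval₂_mul] at this
      rcases mul_eq_zero.mp this with h' | h'
      · exact ha h'
      · exact ih1 h'
    · rw [RatFunc.eval_add (f := RingHom.id ℂ) (a := z) ha ih1, ih2]

theorem Decomp.eval_eq {f : RatFunc ℂ} {p : ℂ[X]} {N : ℕ} {γ : ℕ → ℂ} {k : ℕ → ℕ} {c : ℕ → ℂ}
    (h : Decomp f p N γ k c) {z : ℂ} (hz : ∀ i ∈ Finset.range N, z ≠ γ i) :
    RatFunc.eval (RingHom.id ℂ) z f
      = p.eval z + ∑ i ∈ Finset.range N, c i * ((z - γ i) ^ (k i))⁻¹ := by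
  have hterm : ∀ i ∈ Finset.range N,
      Polynomial.eval₂ (RingHom.id ℂ) z (RatFunc.denom (RatFunc.C (c i) * base (γ i) (k i))) ≠ 0 := by
    intro i hi
    rw [term_eq]
    refine denom_eval_ne_zero_of_dvd (RatFunc.denom_div_dvd _ _) ?_
    simp only [Polynomial.eval_pow, Polynomial.eval_sub, Polynomial.eval_X, Polynomial.eval_C]
    exact pow_ne_zero _ (sub_ne_zero.mpr (hz i hi))
  obtain ⟨hsum1, hsum2⟩ := eval_sum_aux (Finset.range N) _ z hterm
  rw [h.2, RatFunc.eval_add (f := RingHom.id ℂ) (a := z) (by rw [RatFunc.denom_algebraMap]; simp) hsum1, eval_coeP, hsum2]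
  congr 1
  refine Finset.sum_congr rfl (fun i hi => ?_)
  rw [term_eq, eval_div_poly]
  · simp only [Polynomial.eval_pow, Polynomial.eval_sub, Polynomial.eval_X, Polynomial.eval_C,
      Polynomial.eval_C, div_eq_mul_inv]
  · simp only [Polynomial.eval_pow, Polynomial.eval_sub, Polynomial.eval_X, Polynomial.eval_C]
    exact pow_ne_zero _ (sub_ne_zero.mpr (hz i hi))

theorem Decomp.hasLC {f : RatFunc ℂ} {p : ℂ[X]} {N : ℕ} {γ : ℕ → ℂ} {k : ℕ → ℕ} {c : ℕ → ℂ}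
    (h : Decomp f p N γ k c) (α : ℂ) {j : ℕ} (hj : 1 ≤ j) :
    HasLC (fun z => RatFunc.eval (RingHom.id ℂ) z f) α j
      (∑ i ∈ Finset.range N, if γ i = α ∧ k i = j then c i else 0) := by
  obtain ⟨hsum, hnice⟩ := hasLC_sum γ k c N h.1 α hj
  have hPhi := HasLC.add (nice_poly p) hnice (hasLC_poly p α j) hsum
  rw [zero_add] at hPhi
  refine HasLC.congr_off_finite (s := ((Finset.range N).image γ : Finset ℂ))
    (Finset.finite_toSet _) ?_ hPhi
  intro z hzs
  have hz : ∀ i ∈ Finset.range N, z ≠ γ i := by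
    intro i hi he
    exact hzs (by simp only [Finset.coe_image, Set.mem_image]; exact ⟨i, by simpa using hi, he.symm⟩)
  exact (h.eval_eq hz).symm


theorem decomp_const_denom (d : ℂ[X]) (hd : d ≠ 0) (h0 : d.natDegree = 0) (n : ℂ[X]) :
    ∃ p N γ k c, Decomp (algebraMap ℂ[X] (RatFunc ℂ) n / algebraMap ℂ[X] (RatFunc ℂ) d)
      p N γ k c := by
  have hC : d = Polynomial.C (d.coeff 0) := Polynomial.eq_C_of_natDegree_le_zero h0.le
  have hc : d.coeff 0 ≠ 0 := fun h => hd (by rw [hC, h, map_zero])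
  refine ⟨Polynomial.C (d.coeff 0)⁻¹ * n, 0, fun _ => 0, fun _ => 0, fun _ => 0, by simp, ?_⟩
  rw [Finset.range_zero, Finset.sum_empty, add_zero]
  rw [div_eq_iff (RatFunc.algebraMap_ne_zero hd), ← map_mul]
  congr 1
  rw [mul_right_comm]
  nth_rewrite 2 [hC]
  rw [← Polynomial.C_mul, inv_mul_cancel₀ hc, Polynomial.C_1, one_mul]

theorem decomp_exists_aux (M : ℕ) : ∀ (d : ℂ[X]), d ≠ 0 → d.natDegree ≤ M → ∀ n : ℂ[X],
    ∃ p N γ k c, Decomp (algebraMap ℂ[X] (RatFunc ℂ) n / algebraMap ℂ[X] (RatFunc ℂ) d)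
      p N γ k c := by
  induction M with
  | zero => exact fun d hd hdeg n => decomp_const_denom d hd (Nat.le_zero.mp hdeg) n
  | succ M ih =>
    intro d hd hdeg n
    by_cases h0 : d.natDegree = 0
    · exact decomp_const_denom d hd h0 n
    · have hdeg0 : 0 < d.degree :=
        Polynomial.natDegree_pos_iff_degree_pos.mp (Nat.pos_of_ne_zero h0)
      obtain ⟨β, hβ⟩ := Complex.exists_root hdeg0
      set m := d.rootMultiplicity β with hm
      have hm1 : 1 ≤ m := (Polynomial.rootMultiplicity_pos hd).mpr hβ
      set e := d /ₘ (X - Polynomial.C β) ^ m with he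
      have hde : (X - Polynomial.C β) ^ m * e = d :=
        Polynomial.pow_mul_divByMonic_rootMultiplicity_eq d β
      have heval : e.eval β ≠ 0 := Polynomial.eval_divByMonic_pow_rootMultiplicity_ne_zero β hd
      have he0 : e ≠ 0 := fun h => hd (by rw [← hde, h, mul_zero])
      obtain ⟨m', hm'⟩ : ∃ m', m = m' + 1 := ⟨m - 1, by omega⟩
      set cm := n.eval β / e.eval β with hcm
      have hroot : (n - Polynomial.C cm * e).eval β = 0 := by
        simp only [Polynomial.eval_sub, Polynomial.eval_mul, Polynomial.eval_C, hcm]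
        field_simp
        ring
      obtain ⟨n₁, hn₁⟩ := Polynomial.dvd_iff_isRoot.mpr hroot
      set d' := (X - Polynomial.C β) ^ m' * e with hd'
      have hd'0 : d' ≠ 0 := mul_ne_zero (pow_ne_zero _ (Polynomial.X_sub_C_ne_zero β)) he0
      have hdd' : d = (X - Polynomial.C β) * d' := by
        rw [hd', ← hde, hm', pow_succ']
        ring
      have hdegd' : d'.natDegree ≤ M := by
        have h1 : d.natDegree = 1 + d'.natDegree := by
          rw [hdd', Polynomial.natDegree_mul (Polynomial.X_sub_C_ne_zero β) hd'0,
            Polynomial.natDegree_X_sub_C]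
        omega
      obtain ⟨p, N, γ, k, c, hk, hdec⟩ := ih d' hd'0 hdegd' n₁
      have hT : algebraMap ℂ[X] (RatFunc ℂ) (X - Polynomial.C β) ≠ 0 :=
        RatFunc.algebraMap_ne_zero (Polynomial.X_sub_C_ne_zero β)
      have hE : algebraMap ℂ[X] (RatFunc ℂ) e ≠ 0 := RatFunc.algebraMap_ne_zero he0
      have hneq : algebraMap ℂ[X] (RatFunc ℂ) n
          = RatFunc.C cm * algebraMap ℂ[X] (RatFunc ℂ) e
            + algebraMap ℂ[X] (RatFunc ℂ) (X - Polynomial.C β)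
              * algebraMap ℂ[X] (RatFunc ℂ) n₁ := by
        rw [← RatFunc.algebraMap_C (K := ℂ) cm, ← map_mul, ← map_mul, ← map_add]
        congr 1
        linear_combination hn₁
      have hd2 : algebraMap ℂ[X] (RatFunc ℂ) d
          = (algebraMap ℂ[X] (RatFunc ℂ) (X - Polynomial.C β)) ^ (m' + 1)
            * algebraMap ℂ[X] (RatFunc ℂ) e := by
        rw [← map_pow, ← map_mul, ← hm', hde]
      have hd2' : algebraMap ℂ[X] (RatFunc ℂ) d'
          = (algebraMap ℂ[X] (RatFunc ℂ) (X - Polynomial.C β)) ^ m'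
            * algebraMap ℂ[X] (RatFunc ℂ) e := by
        rw [← map_pow, ← map_mul]
      have hgoal : algebraMap ℂ[X] (RatFunc ℂ) n / algebraMap ℂ[X] (RatFunc ℂ) d
          = algebraMap ℂ[X] (RatFunc ℂ) n₁ / algebraMap ℂ[X] (RatFunc ℂ) d'
            + RatFunc.C cm * base β m := by
        rw [hneq, hd2, hd2', base_eq, map_pow, hm']
        set T := algebraMap ℂ[X] (RatFunc ℂ) (X - Polynomial.C β) with hTd
        set E := algebraMap ℂ[X] (RatFunc ℂ) e with hEd
        set A := algebraMap ℂ[X] (RatFunc ℂ) n₁ with hAd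
        set CM := RatFunc.C cm with hCMd
        have hTn : T ≠ 0 := hT
        have hEn : E ≠ 0 := hE
        field_simp
        ring
      refine ⟨p, N + 1, fun i => if i < N then γ i else β, fun i => if i < N then k i else m,
        fun i => if i < N then c i else cm, ?_, ?_⟩
      · intro i hi
        by_cases h : i < N
        · simpa [h] using hk i (Finset.mem_range.mpr h)
        · simpa [h] using hm1
      · rw [Finset.sum_range_succ]
        have hsame : (∑ i ∈ Finset.range N,
            RatFunc.C (if i < N then c i else cm) * base (if i < N then γ i else β)
              (if i < N then k i else m))
            = ∑ i ∈ Finset.range N, RatFunc.C (c i) * base (γ i) (k i) :=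
          Finset.sum_congr rfl (fun i hi => by simp [Finset.mem_range.mp hi])
        simp only [lt_irrefl, if_false]
        rw [hsame, hgoal, hdec]
        ring

theorem decomp_exists (f : RatFunc ℂ) : ∃ p N γ k c, Decomp f p N γ k c := by
  have := decomp_exists_aux (RatFunc.denom f).natDegree (RatFunc.denom f)
    (RatFunc.denom_ne_zero f) le_rfl (RatFunc.num f)
  rwa [RatFunc.num_div_denom] at this


/-! ### The shift endomorphism -/

theorem eval₂_algMap (q : ℂ[X]) :
    Polynomial.eval₂ (algebraMap ℂ (RatFunc ℂ)) (RatFunc.X + 1) q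
      = algebraMap ℂ[X] (RatFunc ℂ) (Polynomial.taylor 1 q) := by
  have h := Polynomial.hom_eval₂ q (Polynomial.C : ℂ →+* ℂ[X])
    (algebraMap ℂ[X] (RatFunc ℂ)) (X + Polynomial.C 1)
  have h1 : Polynomial.eval₂ Polynomial.C (X + Polynomial.C 1) q = Polynomial.taylor 1 q := by
    rw [Polynomial.taylor_apply, Polynomial.comp]
  have h2 : (algebraMap ℂ[X] (RatFunc ℂ)).comp (Polynomial.C : ℂ →+* ℂ[X])
      = algebraMap ℂ (RatFunc ℂ) := by
    rw [← Polynomial.algebraMap_eq]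
    exact (IsScalarTower.algebraMap_eq ℂ ℂ[X] (RatFunc ℂ)).symm ▸ rfl
  have h3 : algebraMap ℂ[X] (RatFunc ℂ) (X + Polynomial.C 1) = RatFunc.X + 1 := by
    rw [map_add, RatFunc.algebraMap_X, RatFunc.algebraMap_C, map_one]
  rw [h1, h2, h3] at h
  exact h.symm

theorem eval_comp_eq_laurent (g : RatFunc ℂ) :
    RatFunc.eval (algebraMap ℂ (RatFunc ℂ)) (RatFunc.X + 1) g = RatFunc.laurent 1 g := by
  unfold RatFunc.eval
  rw [eval₂_algMap, eval₂_algMap, ← RatFunc.laurent_div, RatFunc.num_div_denom]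

theorem laurent_base (γ : ℂ) (k : ℕ) :
    RatFunc.laurent 1 (base γ k) = base (γ - 1) k := by
  rw [base, base, map_pow, map_inv₀, map_sub, RatFunc.laurent_X, RatFunc.laurent_C]
  congr 2
  rw [map_sub]
  simp
  ring

/-! ### Surjectivity of the difference operator on polynomials -/

theorem poly_delta_surj (M : ℕ) : ∀ p : ℂ[X], p.natDegree ≤ M →
    ∃ q : ℂ[X], Polynomial.taylor 1 q - q = p := by
  induction M with
  | zero =>
    intro p hp
    obtain ⟨a, ha⟩ : ∃ a, p = Polynomial.C a :=
      ⟨p.coeff 0, Polynomial.eq_C_of_natDegree_le_zero hp⟩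
    subst ha
    refine ⟨Polynomial.C a * X, ?_⟩
    rw [Polynomial.taylor_apply, Polynomial.mul_comp, Polynomial.C_comp, Polynomial.X_comp,
      Polynomial.C_1]
    ring
  | succ M ih =>
    intro p hp
    by_cases h0 : p.natDegree ≤ M
    · exact ih p h0
    · have hdeg : p.natDegree = M + 1 := by omega
      set a := p.coeff (M + 1) with ha
      set q₀ := Polynomial.C (a / (M + 2 : ℂ)) * X ^ (M + 2) with hq₀
      have hΔ : Polynomial.taylor 1 q₀ - q₀
          = Polynomial.C (a / (M + 2 : ℂ)) * ((X + 1) ^ (M + 2) - X ^ (M + 2)) := by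
        rw [hq₀, Polynomial.taylor_apply, Polynomial.mul_comp, Polynomial.C_comp,
          Polynomial.pow_comp, Polynomial.X_comp]
        rw [Polynomial.C_1]
        ring
      have hM2 : ((M : ℂ) + 2) ≠ 0 := by
        have : ((M + 2 : ℕ) : ℂ) ≠ 0 := Nat.cast_ne_zero.mpr (by omega)
        push_cast at this
        exact this
      have hkey : (p - (Polynomial.taylor 1 q₀ - q₀)).natDegree ≤ M := by
        rw [Polynomial.natDegree_le_iff_coeff_eq_zero]
        intro m hm
        rw [Polynomial.coeff_sub, hΔ, Polynomial.coeff_C_mul, Polynomial.coeff_sub,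
          Polynomial.coeff_X_add_one_pow, Polynomial.coeff_X_pow]
        rcases Nat.lt_or_ge m (M + 2) with h1 | h1
        · have hm1 : m = M + 1 := by omega
          subst hm1
          rw [if_neg (by omega), Nat.choose_succ_self_right]
          rw [← ha]
          push_cast
          field_simp
          ring
        · rcases Nat.eq_or_lt_of_le h1 with h2 | h2
          · rw [← h2, if_pos rfl, Nat.choose_self]
            rw [Polynomial.coeff_eq_zero_of_natDegree_lt (by omega)]
            simp
          · rw [if_neg (by omega), Nat.choose_eq_zero_of_lt h2]
            rw [Polynomial.coeff_eq_zero_of_natDegree_lt (by omega)]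
            simp
      obtain ⟨q₁, hq₁⟩ := ih _ hkey
      refine ⟨q₀ + q₁, ?_⟩
      rw [map_add]
      rw [sub_eq_iff_eq_add] at hq₁ ⊢
      linear_combination hq₁

theorem poly_surj (p : ℂ[X]) : ∃ q : ℂ[X], Polynomial.taylor 1 q - q = p :=
  poly_delta_surj p.natDegree p le_rfl

/-! ### Orbit telescoping -/

theorem orb (γ : ℂ) (k : ℕ) : ∀ n : ℤ, ∃ h : RatFunc ℂ,
    base (γ + (n : ℂ)) k - base γ k = RatFunc.laurent 1 h - h := by
  intro n
  induction n using Int.induction_on with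
  | zero => exact ⟨0, by simp⟩
  | succ n ih =>
    obtain ⟨h, hh⟩ := ih
    refine ⟨h - base (γ + ((n : ℂ) + 1)) k, ?_⟩
    have h1 : RatFunc.laurent 1 (base (γ + ((n : ℂ) + 1)) k) = base (γ + (n : ℂ)) k := by
      rw [laurent_base]
      congr 1
      ring
    rw [map_sub, h1]
    have h2 : (((n : ℤ) + 1 : ℤ) : ℂ) = (n : ℂ) + 1 := by push_cast; ring
    rw [h2]
    linear_combination hh
  | pred n ih =>
    obtain ⟨h, hh⟩ := ih
    refine ⟨h + base (γ + (-(n : ℂ))) k, ?_⟩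
    have h1 : RatFunc.laurent 1 (base (γ + (-(n : ℂ))) k) = base (γ + (-(n : ℂ) - 1)) k := by
      rw [laurent_base]
      congr 1
      ring
    rw [map_add, h1]
    have h2 : ((-(n : ℤ) - 1 : ℤ) : ℂ) = -(n : ℂ) - 1 := by push_cast; ring
    have h3 : ((-(n : ℤ) : ℤ) : ℂ) = -(n : ℂ) := by push_cast; ring
    rw [h2]
    rw [h3] at hh
    linear_combination hh

/-! ### Orbit representatives -/

def intShift : Setoid ℂ :=
  ⟨fun a b => ∃ n : ℤ, a = b + n,
    ⟨fun a => ⟨0, by simp⟩,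
     fun {a b} ⟨n, h⟩ => ⟨-n, by rw [h]; push_cast; ring⟩,
     fun {a b c} ⟨n, h⟩ ⟨m, h'⟩ => ⟨m + n, by rw [h, h']; push_cast; ring⟩⟩⟩

local instance intShiftSetoid : Setoid ℂ := intShift

def rep (a : ℂ) : ℂ := (⟦a⟧ : Quotient intShiftSetoid).out

theorem rep_rel (a : ℂ) : ∃ n : ℤ, rep a = a + n := Quotient.mk_out a

theorem rep_eq_of_rel {a b : ℂ} (h : ∃ n : ℤ, a = b + n) : rep a = rep b := by
  unfold rep
  rw [Quotient.sound h]

theorem rep_idem (a : ℂ) : rep (rep a) = rep a := rep_eq_of_rel (rep_rel a)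


/-! ### Discrete residues -/

open scoped Classical in
theorem Decomp.dres {f : RatFunc ℂ} {p : ℂ[X]} {N : ℕ} {γ : ℕ → ℂ} {k : ℕ → ℕ} {c : ℕ → ℂ}
    (h : Decomp f p N γ k c) (β : ℂ) {j : ℕ} (hj : 1 ≤ j) :
    (∑' n : ℤ, laurentCoeff (fun z => RatFunc.eval (RingHom.id ℂ) z f) (β + (n : ℂ)) j)
      = ∑ i ∈ Finset.range N, if (∃ n : ℤ, γ i = β + (n : ℂ)) ∧ k i = j then c i else 0 := by
  classical
  have hlc : ∀ n : ℤ, laurentCoeff (fun z => RatFunc.eval (RingHom.id ℂ) z f) (β + (n : ℂ)) j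
      = ∑ i ∈ Finset.range N, if γ i = β + (n : ℂ) ∧ k i = j then c i else 0 :=
    fun n => (h.hasLC (β + (n : ℂ)) hj).laurentCoeff_eq
  rw [tsum_congr hlc]
  have hsm : ∀ i ∈ Finset.range N,
      Summable (fun n : ℤ => if γ i = β + (n : ℂ) ∧ k i = j then c i else 0) := by
    intro i _
    by_cases hex : ∃ n : ℤ, γ i = β + (n : ℂ)
    · obtain ⟨n₀, hn₀⟩ := hex
      refine summable_of_ne_finset_zero (s := {n₀}) (fun n hn => ?_)
      rw [if_neg]
      rintro ⟨h1, -⟩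
      apply hn
      rw [Finset.mem_singleton]
      have : (n : ℂ) = (n₀ : ℂ) := by
        have := h1.symm.trans hn₀
        exact add_left_cancel this
      exact_mod_cast this
    · refine summable_of_ne_finset_zero (s := ∅) (fun n _ => ?_)
      rw [if_neg]
      rintro ⟨h1, -⟩
      exact hex ⟨n, h1⟩
  rw [Summable.tsum_finsetSum hsm]
  refine Finset.sum_congr rfl (fun i _ => ?_)
  by_cases hex : ∃ n : ℤ, γ i = β + (n : ℂ)
  · obtain ⟨n₀, hn₀⟩ := hex
    rw [tsum_eq_single n₀ (fun n hn => ?_)]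
    · have hiff : (γ i = β + (n₀ : ℂ) ∧ k i = j) ↔ ((∃ n : ℤ, γ i = β + (n : ℂ)) ∧ k i = j) :=
        ⟨fun ⟨h1, h2⟩ => ⟨⟨n₀, h1⟩, h2⟩, fun ⟨_, h2⟩ => ⟨hn₀, h2⟩⟩
      rw [if_congr hiff rfl rfl]
    · rw [if_neg]
      rintro ⟨h1, -⟩
      apply hn
      have : (n : ℂ) = (n₀ : ℂ) := add_left_cancel (h1.symm.trans hn₀)
      exact_mod_cast this
  · have hz : ∀ n : ℤ, (if γ i = β + (n : ℂ) ∧ k i = j then c i else 0) = 0 := by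
      intro n
      rw [if_neg]
      rintro ⟨h1, -⟩
      exact hex ⟨n, h1⟩
    rw [tsum_congr hz, tsum_zero, if_neg]
    rintro ⟨h1, -⟩
    exact hex h1

end S13

end S13aux

open S13 in
open scoped Polynomial in
/-- a rational function `f` is a difference `g(x+1) − g(x)` of rational
functions iff all of its discrete residues vanish. -/
theorem statement13 (f : RatFunc ℂ) :
    (∃ g : RatFunc ℂ,
      RatFunc.eval (algebraMap ℂ (RatFunc ℂ)) (RatFunc.X + 1) g - g = f) ↔
    ∀ β : ℂ, ∀ j : ℕ, 1 ≤ j →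
      (∑' n : ℤ, laurentCoeff (fun z => RatFunc.eval (RingHom.id ℂ) z f)
        (β + (n : ℂ)) j) = 0 := by
  classical
  constructor
  · rintro ⟨g, hg⟩ β j hj
    rw [eval_comp_eq_laurent] at hg
    obtain ⟨p, N, γ, k, c, hdec⟩ := decomp_exists g
    have hfdec : Decomp f (Polynomial.taylor 1 p - p) (N + N)
        (fun i => if i < N then γ i - 1 else γ (i - N))
        (fun i => if i < N then k i else k (i - N))
        (fun i => if i < N then c i else -(c (i - N))) := by
      constructor
      · intro i hi
        rw [Finset.mem_range] at hi
        by_cases h : i < N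
        · simpa [h] using hdec.1 i (Finset.mem_range.mpr h)
        · have h2 : i - N < N := by omega
          simpa [h] using hdec.1 (i - N) (Finset.mem_range.mpr h2)
      · have hσ : RatFunc.laurent 1 (algebraMap ℂ[X] (RatFunc ℂ) p
            + ∑ i ∈ Finset.range N, RatFunc.C (c i) * base (γ i) (k i))
            = algebraMap ℂ[X] (RatFunc ℂ) (Polynomial.taylor 1 p)
              + ∑ i ∈ Finset.range N, RatFunc.C (c i) * base (γ i - 1) (k i) := by
          rw [map_add, RatFunc.laurent_algebraMap, map_sum]
          congr 1
          refine Finset.sum_congr rfl (fun i _ => ?_)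
          rw [map_mul, RatFunc.laurent_C, laurent_base]
        rw [← hg, hdec.2, hσ, Finset.sum_range_add]
        have e1 : (∑ i ∈ Finset.range N, RatFunc.C (if i < N then c i else -(c (i - N)))
              * base (if i < N then γ i - 1 else γ (i - N)) (if i < N then k i else k (i - N)))
            = ∑ i ∈ Finset.range N, RatFunc.C (c i) * base (γ i - 1) (k i) :=
          Finset.sum_congr rfl (fun i hi => by simp [Finset.mem_range.mp hi])
        have e2 : (∑ i ∈ Finset.range N, RatFunc.C (if N + i < N then c (N + i) else -(c (N + i - N)))
              * base (if N + i < N then γ (N + i) - 1 else γ (N + i - N))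
                (if N + i < N then k (N + i) else k (N + i - N)))
            = ∑ i ∈ Finset.range N, -(RatFunc.C (c i) * base (γ i) (k i)) :=
          Finset.sum_congr rfl (fun i hi => by
            have h : ¬(N + i < N) := by omega
            simp only [h, if_false, Nat.add_sub_cancel_left, map_neg, neg_mul])
        rw [e1, e2, Finset.sum_neg_distrib, map_sub]
        ring
    rw [hfdec.dres β hj, Finset.sum_range_add]
    have hA : ∀ i ∈ Finset.range N,
        (if (∃ n : ℤ, (if i < N then γ i - 1 else γ (i - N)) = β + (n : ℂ))
            ∧ (if i < N then k i else k (i - N)) = j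
          then (if i < N then c i else -(c (i - N))) else 0)
        = (if (∃ n : ℤ, γ i = β + (n : ℂ)) ∧ k i = j then c i else 0) := by
      intro i hi
      have h : i < N := Finset.mem_range.mp hi
      simp only [h, if_true]
      refine if_congr (and_congr_left' ⟨?_, ?_⟩) rfl rfl
      · rintro ⟨n, hn⟩
        exact ⟨n + 1, by push_cast; linear_combination hn⟩
      · rintro ⟨n, hn⟩
        exact ⟨n - 1, by push_cast; linear_combination hn⟩
    have hB : ∀ i ∈ Finset.range N,
        (if (∃ n : ℤ, (if N + i < N then γ (N + i) - 1 else γ (N + i - N)) = β + (n : ℂ))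
            ∧ (if N + i < N then k (N + i) else k (N + i - N)) = j
          then (if N + i < N then c (N + i) else -(c (N + i - N))) else 0)
        = -(if (∃ n : ℤ, γ i = β + (n : ℂ)) ∧ k i = j then c i else 0) := by
      intro i hi
      have h : ¬(N + i < N) := by omega
      simp only [h, if_false, Nat.add_sub_cancel_left]
      split_ifs <;> simp
    rw [Finset.sum_congr rfl hA, Finset.sum_congr rfl hB, Finset.sum_neg_distrib]
    ring
  · intro hres
    obtain ⟨p, N, γ, k, c, hdec⟩ := decomp_exists f
    have hres' : ∀ β : ℂ, ∀ j : ℕ, 1 ≤ j →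
        (∑ i ∈ Finset.range N, if (∃ n : ℤ, γ i = β + (n : ℂ)) ∧ k i = j then c i else 0) = 0 :=
      fun β j hj => by rw [← hdec.dres β hj]; exact hres β j hj
    have horb : ∀ i : ℕ, ∃ h : RatFunc ℂ,
        RatFunc.C (c i) * base (γ i) (k i)
          = RatFunc.C (c i) * base (rep (γ i)) (k i) + (RatFunc.laurent 1 h - h) := by
      intro i
      obtain ⟨n, hn⟩ := rep_rel (γ i)
      obtain ⟨h, hh⟩ := orb (γ i) (k i) n
      refine ⟨-(RatFunc.C (c i) * h), ?_⟩
      rw [← hn] at hh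
      rw [map_neg, map_mul, RatFunc.laurent_C]
      linear_combination (-(RatFunc.C (c i))) * hh
    choose hfun hfun_spec using horb
    obtain ⟨q, hq⟩ := poly_surj p
    have hzero : ∑ i ∈ Finset.range N, RatFunc.C (c i) * base (rep (γ i)) (k i) = 0 := by
      rw [← Finset.sum_fiberwise_of_maps_to
        (g := fun i => (rep (γ i), k i))
        (t := (Finset.range N).image (fun i => (rep (γ i), k i)))
        (fun i hi => Finset.mem_image_of_mem _ hi)]
      refine Finset.sum_eq_zero (fun y hy => ?_)
      obtain ⟨i₀, hi₀, hkey⟩ := Finset.mem_image.mp hy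
      have hinner : (∑ i ∈ (Finset.range N).filter (fun i => (rep (γ i), k i) = y),
            RatFunc.C (c i) * base (rep (γ i)) (k i))
          = RatFunc.C (∑ i ∈ (Finset.range N).filter (fun i => (rep (γ i), k i) = y), c i)
              * base y.1 y.2 := by
        rw [map_sum, Finset.sum_mul]
        refine Finset.sum_congr rfl (fun i hi => ?_)
        obtain ⟨-, h2⟩ := Finset.mem_filter.mp hi
        rw [show rep (γ i) = y.1 from congrArg Prod.fst h2,
          show k i = y.2 from congrArg Prod.snd h2]
      rw [hinner]
      have h1j : 1 ≤ y.2 := by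
        have := hdec.1 i₀ hi₀
        rw [← congrArg Prod.snd hkey]
        exact this
      have hcoeff : (∑ i ∈ (Finset.range N).filter (fun i => (rep (γ i), k i) = y), c i)
          = ∑ i ∈ Finset.range N, (if (∃ n : ℤ, γ i = y.1 + (n : ℂ)) ∧ k i = y.2
              then c i else 0) := by
        rw [Finset.sum_filter]
        refine Finset.sum_congr rfl (fun i _ => ?_)
        refine if_congr ⟨?_, ?_⟩ rfl rfl
        · intro h
          constructor
          · obtain ⟨n, hn⟩ := rep_rel (γ i)
            refine ⟨-n, ?_⟩
            rw [← congrArg Prod.fst h, hn]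
            push_cast
            ring
          · exact congrArg Prod.snd h
        · rintro ⟨⟨n, hn⟩, hkk⟩
          have hrr : rep (γ i) = rep y.1 := rep_eq_of_rel ⟨n, hn⟩
          have hy1 : rep y.1 = y.1 := by
            rw [← congrArg Prod.fst hkey, rep_idem]
          exact Prod.ext (by rw [hrr, hy1]) hkk
      rw [hcoeff, hres' y.1 y.2 h1j, map_zero, zero_mul]
    refine ⟨algebraMap ℂ[X] (RatFunc ℂ) q + ∑ i ∈ Finset.range N, hfun i, ?_⟩
    rw [eval_comp_eq_laurent, map_add, map_sum, RatFunc.laurent_algebraMap]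
    have hterms : f = algebraMap ℂ[X] (RatFunc ℂ) p
        + ∑ i ∈ Finset.range N, (RatFunc.C (c i) * base (rep (γ i)) (k i)
            + (RatFunc.laurent 1 (hfun i) - hfun i)) := by
      rw [hdec.2]
      congr 1
      exact Finset.sum_congr rfl (fun i _ => hfun_spec i)
    rw [hterms]
    rw [Finset.sum_add_distrib, hzero, zero_add, Finset.sum_sub_distrib]
    have hpq : algebraMap ℂ[X] (RatFunc ℂ) (Polynomial.taylor 1 q)
        - algebraMap ℂ[X] (RatFunc ℂ) q = algebraMap ℂ[X] (RatFunc ℂ) p := by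
      rw [← map_sub, hq]
    linear_combination hpq
end
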